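/- Let (F, F₂, F₀, γ) be a monoidal functor with anomaly from a strict monoidal category C to a k-linear strict monoidal category D with k-bilinear tensor product, with chosen splittings p_X, q_X of the idempotents Π_X, and let F̃₂(X,Y) := p_{X⊗Y}∘F₂(X,Y)∘(q_X⊗q_Y). Then F̃₂ satisfies the associativity coherence: for all objects X, Y, Z of C, F̃₂(X,Y⊗Z)∘(id_{F̃(X)}⊗F̃₂(Y,Z)) = F̃₂(X⊗Y,Z)∘(F̃₂(X,Y)⊗id_{F̃(Z)}). -/

import Mathlib

open CategoryTheory MonoidalCategory

set_option maxHeartbeats 1000000 in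
/-- With `F̃(f) = p ∘ F(f) ∘ q` and
`F̃₂(X,Y) = p_{X⊗Y} ∘ F₂(X,Y) ∘ (q_X ⊗ q_Y)`, the family `F̃₂` satisfies the
associativity coherence `F̃₂(X,Y⊗Z) ∘ (id ⊗ F̃₂(Y,Z)) = F̃₂(X⊗Y,Z) ∘ (F̃₂(X,Y) ⊗ id)`
(stated with the associators inserted, as for `F`). -/
theorem stmt_11 {k : Type*} [Field k]
    {C : Type*} [Category C] [MonoidalCategory C]
    {D : Type*} [Category D] [Preadditive D] [Linear k D] [MonoidalCategory D]
    [MonoidalPreadditive D] [MonoidalLinear k D]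
    (γ : ∀ {X Y Z : C}, (X ⟶ Y) → (Y ⟶ Z) → kˣ)
    (hcocycle : ∀ {X Y Z W : C} (f : X ⟶ Y) (g : Y ⟶ Z) (h : Z ⟶ W),
      γ f (g ≫ h) * γ g h = γ (f ≫ g) h * γ f g)
    (hγmon : ∀ {X Y Z X' Y' Z' : C} (f : X ⟶ Y) (g : Y ⟶ Z)
      (f' : X' ⟶ Y') (g' : Y' ⟶ Z'),
      γ (f ⊗ₘ f') (g ⊗ₘ g') = γ f g * γ f' g')
    (Fobj : C → D) (Fmap : ∀ {X Y : C}, (X ⟶ Y) → (Fobj X ⟶ Fobj Y))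
    (hF : ∀ {X Y Z : C} (f : X ⟶ Y) (g : Y ⟶ Z),
      Fmap (f ≫ g) = (γ f g : k) • (Fmap f ≫ Fmap g))
    (F₂ : ∀ X Y : C, Fobj X ⊗ Fobj Y ⟶ Fobj (X ⊗ Y))
    (F₀ : 𝟙_ D ⟶ Fobj (𝟙_ C))
    (hF₂nat : ∀ {X X' Y Y' : C} (f : X ⟶ X') (g : Y ⟶ Y'),
      F₂ X Y ≫ Fmap (f ⊗ₘ g) = (Fmap f ⊗ₘ Fmap g) ≫ F₂ X' Y')
    (hassoc : ∀ X Y Z : C,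
      (F₂ X Y ⊗ₘ 𝟙 (Fobj Z)) ≫ F₂ (X ⊗ Y) Z ≫ Fmap (α_ X Y Z).hom =
        (α_ (Fobj X) (Fobj Y) (Fobj Z)).hom ≫ (𝟙 (Fobj X) ⊗ₘ F₂ Y Z) ≫ F₂ X (Y ⊗ Z))
    (hrunit : ∀ X : C,
      (𝟙 (Fobj X) ⊗ₘ F₀) ≫ F₂ X (𝟙_ C) ≫ Fmap (ρ_ X).hom = (ρ_ (Fobj X)).hom)
    (hlunit : ∀ X : C,
      (F₀ ⊗ₘ 𝟙 (Fobj X)) ≫ F₂ (𝟙_ C) X ≫ Fmap (λ_ X).hom = (λ_ (Fobj X)).hom)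
    (Ftobj : C → D)
    (p : ∀ X : C, Fobj X ⟶ Ftobj X) (q : ∀ X : C, Ftobj X ⟶ Fobj X)
    (hpq : ∀ X : C, q X ≫ p X = 𝟙 (Ftobj X))
    (hqp : ∀ X : C, p X ≫ q X = (γ (𝟙 X) (𝟙 X) : k) • Fmap (𝟙 X))
    :
    ∀ X Y Z : C,
      (((q X ⊗ₘ q Y) ≫ F₂ X Y ≫ p (X ⊗ Y)) ⊗ₘ 𝟙 (Ftobj Z)) ≫
          ((q (X ⊗ Y) ⊗ₘ q Z) ≫ F₂ (X ⊗ Y) Z ≫ p ((X ⊗ Y) ⊗ Z)) ≫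
          (q ((X ⊗ Y) ⊗ Z) ≫ Fmap (α_ X Y Z).hom ≫ p (X ⊗ (Y ⊗ Z))) =
        (α_ (Ftobj X) (Ftobj Y) (Ftobj Z)).hom ≫
          (𝟙 (Ftobj X) ⊗ₘ ((q Y ⊗ₘ q Z) ≫ F₂ Y Z ≫ p (Y ⊗ Z))) ≫
          ((q X ⊗ₘ q (Y ⊗ Z)) ≫ F₂ X (Y ⊗ Z) ≫ p (X ⊗ (Y ⊗ Z))) := by

  intro X Y Z
  have hγ1r : ∀ {A B : C} (f : A ⟶ B), γ f (𝟙 B) = γ (𝟙 B) (𝟙 B) := by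
    intro A B f
    have h := hcocycle f (𝟙 B) (𝟙 B)
    simp only [Category.comp_id] at h
    exact (mul_left_cancel h).symm
  have hγ1l : ∀ {A B : C} (f : A ⟶ B), γ (𝟙 A) f = γ (𝟙 A) (𝟙 A) := by
    intro A B f
    have h := hcocycle (𝟙 A) (𝟙 A) f
    simp only [Category.id_comp] at h
    exact mul_left_cancel h
  have habs_l : ∀ {A B : C} (f : A ⟶ B),
      ((γ (𝟙 A) (𝟙 A) : k) • Fmap (𝟙 A)) ≫ Fmap f = Fmap f := by
    intro A B f
    rw [Linear.smul_comp, ← hγ1l f, ← hF, Category.id_comp]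
  have hep : ∀ A : C, ((γ (𝟙 A) (𝟙 A) : k) • Fmap (𝟙 A)) ≫ p A = p A := by
    intro A
    rw [← hqp, Category.assoc, hpq, Category.comp_id]
  have hqe : ∀ A : C, q A ≫ ((γ (𝟙 A) (𝟙 A) : k) • Fmap (𝟙 A)) = q A := by
    intro A
    rw [← hqp, ← Category.assoc, hpq, Category.id_comp]
  have hten : ∀ A B : C,
      (((γ (𝟙 A) (𝟙 A) : k) • Fmap (𝟙 A)) ⊗ₘ ((γ (𝟙 B) (𝟙 B) : k) • Fmap (𝟙 B))) ≫ F₂ A B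
        = F₂ A B ≫ ((γ (𝟙 (A ⊗ B)) (𝟙 (A ⊗ B)) : k) • Fmap (𝟙 (A ⊗ B))) := by
    intro A B
    have hmon := hγmon (𝟙 A) (𝟙 A) (𝟙 B) (𝟙 B)
    rw [id_tensorHom_id] at hmon
    have hmonk : ((γ (𝟙 (A ⊗ B)) (𝟙 (A ⊗ B)) : kˣ) : k)
        = (γ (𝟙 A) (𝟙 A) : k) * (γ (𝟙 B) (𝟙 B) : k) := by
      rw [hmon]; simp
    have hnat := hF₂nat (𝟙 A) (𝟙 B)
    rw [id_tensorHom_id] at hnat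
    have hst : (((γ (𝟙 A) (𝟙 A) : k) • Fmap (𝟙 A)) ⊗ₘ ((γ (𝟙 B) (𝟙 B) : k) • Fmap (𝟙 B)))
        = ((γ (𝟙 A) (𝟙 A) : k) * (γ (𝟙 B) (𝟙 B) : k)) • (Fmap (𝟙 A) ⊗ₘ Fmap (𝟙 B)) := by
      simp [MonoidalCategory.tensorHom_def, mul_smul, smul_comm ((γ (𝟙 A) (𝟙 A) : k)) ((γ (𝟙 B) (𝟙 B) : k))]
    rw [hst, Linear.smul_comp, ← hnat, Linear.comp_smul, hmonk]
  simp only [comp_tensor_id, id_tensor_comp, Category.assoc]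
  have hsplit1 : (((γ (𝟙 (X ⊗ Y)) (𝟙 (X ⊗ Y)) : k) • Fmap (𝟙 (X ⊗ Y))) ⊗ₘ q Z)
      = (𝟙 (Fobj (X ⊗ Y)) ⊗ₘ q Z) ≫
        (((γ (𝟙 (X ⊗ Y)) (𝟙 (X ⊗ Y)) : k) • Fmap (𝟙 (X ⊗ Y))) ⊗ₘ ((γ (𝟙 Z) (𝟙 Z) : k) • Fmap (𝟙 Z))) := by
    rw [tensorHom_comp_tensorHom, Category.id_comp, hqe]
  have hsplit2 : (F₂ X Y ⊗ₘ q Z)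
      = (𝟙 (Fobj X ⊗ Fobj Y) ⊗ₘ q Z) ≫ (F₂ X Y ⊗ₘ 𝟙 (Fobj Z)) := by
    rw [tensorHom_comp_tensorHom, Category.id_comp, Category.comp_id]
  -- LHS
  slice_lhs 6 7 => rw [hqp]
  slice_lhs 6 7 => rw [habs_l]
  slice_lhs 3 4 => rw [tensorHom_comp_tensorHom, hqp, Category.id_comp, hsplit1]
  slice_lhs 2 3 => rw [tensorHom_comp_tensorHom, Category.comp_id, Category.id_comp, hsplit2]
  slice_lhs 1 2 => rw [tensorHom_comp_tensorHom, Category.comp_id, Category.id_comp]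
  simp only [Category.assoc]
  slice_lhs 3 4 => rw [hten]
  slice_lhs 4 5 => rw [habs_l]
  slice_lhs 2 4 => rw [hassoc]
  slice_lhs 1 2 => rw [associator_naturality]
  have hsplit3 : (q X ⊗ₘ ((γ (𝟙 (Y ⊗ Z)) (𝟙 (Y ⊗ Z)) : k) • Fmap (𝟙 (Y ⊗ Z))))
      = (q X ⊗ₘ 𝟙 (Fobj (Y ⊗ Z))) ≫
        (((γ (𝟙 X) (𝟙 X) : k) • Fmap (𝟙 X)) ⊗ₘ ((γ (𝟙 (Y ⊗ Z)) (𝟙 (Y ⊗ Z)) : k) • Fmap (𝟙 (Y ⊗ Z)))) := by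
    rw [tensorHom_comp_tensorHom, hqe, Category.id_comp]
  have hsplit4 : (q X ⊗ₘ F₂ Y Z)
      = (q X ⊗ₘ 𝟙 (Fobj Y ⊗ Fobj Z)) ≫ (𝟙 (Fobj X) ⊗ₘ F₂ Y Z) := by
    rw [tensorHom_comp_tensorHom, Category.id_comp, Category.comp_id]
  slice_rhs 4 5 => rw [tensorHom_comp_tensorHom, hqp, Category.id_comp, hsplit3]
  slice_rhs 3 4 => rw [tensorHom_comp_tensorHom, Category.comp_id, Category.id_comp, hsplit4]
  slice_rhs 2 3 => rw [tensorHom_comp_tensorHom, Category.comp_id, Category.id_comp]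
  slice_rhs 4 5 => rw [hten]
  slice_rhs 5 6 => rw [hep]
  simp only [Category.assoc]
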